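/- Let α > 0, ε > 0, and p ∈ (0,1]. Let μ₁ and μ₂ be Borel probability measures on ℝ such that μ₁([z, ∞)) ≥ e^{−αz} for all z ≥ 0. Then the mixture p·μ₁ + (1−p)·μ₂ is not the exponential distribution with rate α + ε; that is, it is not the case that (p·μ₁ + (1−p)·μ₂)([z, ∞)) = e^{−(α+ε)z} for all z ≥ 0. -/

import Mathlib

open MeasureTheory

/-- If `μ₁` stochastically dominates `Exp(α)` (its survival function is at least
`e^(-αz)` for `z ≥ 0`) and `p > 0`, then the mixture `p·μ₁ + (1-p)·μ₂` is not the
exponential distribution with rate `α + ε`, i.e. its survival function cannot equal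
`e^(-(α+ε)z)` for all `z ≥ 0`. -/
theorem stmt_10 (α ε : ℝ) (hα : 0 < α) (hε : 0 < ε) (p : ℝ) (hp0 : 0 < p) (hp1 : p ≤ 1)
    (μ₁ μ₂ : Measure ℝ) [IsProbabilityMeasure μ₁] [IsProbabilityMeasure μ₂]
    (h₁ : ∀ z : ℝ, 0 ≤ z → Real.exp (-α * z) ≤ (μ₁ (Set.Ici z)).toReal) :
    ¬ ∀ z : ℝ, 0 ≤ z →
      p * (μ₁ (Set.Ici z)).toReal + (1 - p) * (μ₂ (Set.Ici z)).toReal =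
        Real.exp (-(α + ε) * z) := by
  intro h
  set z : ℝ := (Real.log p⁻¹ + 1) / ε with hz
  have hlog : 0 ≤ Real.log p⁻¹ := Real.log_nonneg (by
    rw [le_inv_comm₀ one_pos hp0]; simpa using hp1)
  have hz0 : 0 ≤ z := div_nonneg (by linarith) hε.le
  have hμ2 : 0 ≤ (1 - p) * (μ₂ (Set.Ici z)).toReal :=
    mul_nonneg (by linarith) ENNReal.toReal_nonneg
  have key : p * Real.exp (-α * z) ≤ Real.exp (-(α + ε) * z) := by
    calc p * Real.exp (-α * z) ≤ p * (μ₁ (Set.Ici z)).toReal :=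
          mul_le_mul_of_nonneg_left (h₁ z hz0) hp0.le
      _ ≤ p * (μ₁ (Set.Ici z)).toReal + (1 - p) * (μ₂ (Set.Ici z)).toReal := by linarith
      _ = Real.exp (-(α + ε) * z) := h z hz0
  have hsplit : Real.exp (-(α + ε) * z) = Real.exp (-α * z) * Real.exp (-ε * z) := by
    rw [← Real.exp_add]; ring_nf
  have hp_le : p ≤ Real.exp (-ε * z) := by
    have hpos : 0 < Real.exp (-α * z) := Real.exp_pos _
    rw [hsplit, mul_comm (Real.exp (-α * z))] at key
    exact le_of_mul_le_mul_right (by linarith [key]) hpos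
  have hεz : -ε * z = -(Real.log p⁻¹ + 1) := by
    rw [hz]; field_simp
  rw [hεz, Real.exp_neg, Real.exp_add, Real.exp_log (by positivity)] at hp_le
  have h1e : 1 < Real.exp 1 := by linarith [Real.exp_one_gt_d9]
  have heq : (p⁻¹ * Real.exp 1)⁻¹ = p / Real.exp 1 := by
    field_simp
  rw [heq] at hp_le
  have := (div_lt_self hp0 h1e)
  nlinarith
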